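/- Let λ ∈ ℂ*, α, β ∈ ℂ and define operators on ℂ[t] by L_{i,1}·f(t) = ∑_{s≥0} (−1)^s β^{s+1}(t − iα − (s+1)αβ) f^{(s)}(t − i) and L_{i,2}·f(t) = ∑_{s≥0} (−1)^s (s+1) β^{s+2}(t − iα − (s+2)αβ) f^{(s)}(t − i), where f^{(s)} is the s-th derivative (the sums are finite since f is a polynomial). Then L_{i,1}·(L_{j,1}·f) − L_{j,1}·(L_{i,1}·f) = (j − i)·(L_{i+j,2}·f) for all i, j ∈ ℤ and f ∈ ℂ[t]. -/
import Mathlib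


open Polynomial

/-- The operator `L_{i,1}` of `W(-1)` on `ℂ[t]` in derivative form:
`L_{i,1}·f = ∑_{s≥0} (-1)^s β^{s+1}(t - iα - (s+1)αβ) f^{(s)}(t-i)`
(the sum is finite: terms with `s > deg f` vanish). -/
noncomputable def Wm1L1 (lam α β : ℂ) (i : ℤ) (f : ℂ[X]) : ℂ[X] :=
  ∑ s ∈ Finset.range (f.natDegree + 1),
    C (lam ^ i * (-1 : ℂ) ^ s * β ^ (s + 1)) *
      (X - C ((i : ℂ) * α + ((s : ℂ) + 1) * α * β)) *
      ((⇑(Polynomial.derivative (R := ℂ)))^[s] f).comp (X - C (i : ℂ))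

/-- The operator `L_{i,2}` of `W(-1)` on `ℂ[t]` in derivative form:
`L_{i,2}·f = ∑_{s≥0} (-1)^s (s+1) β^{s+2}(t - iα - (s+2)αβ) f^{(s)}(t-i)`. -/
noncomputable def Wm1L2 (lam α β : ℂ) (i : ℤ) (f : ℂ[X]) : ℂ[X] :=
  ∑ s ∈ Finset.range (f.natDegree + 1),
    C (lam ^ i * (-1 : ℂ) ^ s * ((s : ℂ) + 1) * β ^ (s + 2)) *
      (X - C ((i : ℂ) * α + ((s : ℂ) + 2) * α * β)) *
      ((⇑(Polynomial.derivative (R := ℂ)))^[s] f).comp (X - C (i : ℂ))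



noncomputable section
namespace Stmt17Aux

/-- General derivative-series operator `f ↦ ∑ w s (-β)^s f^(s)`. -/
noncomputable def Sg (w : ℕ → ℂ) (β : ℂ) (f : ℂ[X]) : ℂ[X] :=
  ∑ s ∈ Finset.range (f.natDegree + 1),
    C (w s * (-β) ^ s) * (⇑(derivative (R := ℂ)))^[s] f

lemma Sg_trunc (w : ℕ → ℂ) (β : ℂ) (f : ℂ[X]) {N : ℕ} (h : f.natDegree ≤ N) :
    Sg w β f = ∑ s ∈ Finset.range (N + 1),
      C (w s * (-β) ^ s) * (⇑(derivative (R := ℂ)))^[s] f := by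
  refine Finset.sum_subset (Finset.range_subset_range.2 (by omega)) ?_
  intro s hs hns
  simp only [Finset.mem_range] at hs hns
  rw [Polynomial.iterate_derivative_eq_zero (by omega), mul_zero]

lemma iter_add (s : ℕ) (f g : ℂ[X]) :
    (⇑(derivative (R := ℂ)))^[s] (f + g)
      = (⇑(derivative (R := ℂ)))^[s] f + (⇑(derivative (R := ℂ)))^[s] g := by
  induction s generalizing f g with
  | zero => simp
  | succ n ih => simp [Function.iterate_succ_apply, derivative_add, ih]

lemma iter_comp (s : ℕ) (a : ℂ) (f : ℂ[X]) :
    (⇑(derivative (R := ℂ)))^[s] (f.comp (X - C a))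
      = ((⇑(derivative (R := ℂ)))^[s] f).comp (X - C a) := by
  induction s generalizing f with
  | zero => simp
  | succ n ih =>
      rw [Function.iterate_succ_apply', Function.iterate_succ_apply', ih, derivative_comp]
      simp

lemma iter_Xmul (s : ℕ) (f : ℂ[X]) :
    (⇑(derivative (R := ℂ)))^[s] (X * f)
      = X * (⇑(derivative (R := ℂ)))^[s] f
        + C (s : ℂ) * (⇑(derivative (R := ℂ)))^[s - 1] f := by
  induction s generalizing f with
  | zero => simp
  | succ n ih =>
      rw [Function.iterate_succ_apply]
      have hd : derivative (X * f) = f + X * derivative f := by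
        rw [derivative_mul, derivative_X, one_mul]
      rw [hd, iter_add, ih]
      have h2 : C (n : ℂ) * (⇑(derivative (R := ℂ)))^[n - 1] (derivative f)
          = C (n : ℂ) * (⇑(derivative (R := ℂ)))^[n] f := by
        cases n with
        | zero => simp
        | succ m =>
            rw [← Function.iterate_succ_apply]
            norm_num
      rw [h2, ← Function.iterate_succ_apply]
      have h3 : C (((n + 1 : ℕ) : ℂ)) = C ((n : ℕ) : ℂ) + 1 := by
        rw [Nat.cast_add, Nat.cast_one, C_add, C_1]
      simp only [Nat.succ_eq_add_one, Nat.succ_sub_one, Nat.add_sub_cancel, h3]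
      ring

lemma Sg_add (w : ℕ → ℂ) (β : ℂ) (f g : ℂ[X]) :
    Sg w β (f + g) = Sg w β f + Sg w β g := by
  obtain ⟨N, h1, h2, h3⟩ : ∃ N, f.natDegree ≤ N ∧ g.natDegree ≤ N ∧ (f + g).natDegree ≤ N :=
    ⟨f.natDegree + g.natDegree + (f + g).natDegree, by omega, by omega, by omega⟩
  rw [Sg_trunc w β f h1, Sg_trunc w β g h2,
    Sg_trunc w β (f + g) h3, ← Finset.sum_add_distrib]
  exact Finset.sum_congr rfl fun s _ => by rw [iter_add, mul_add]

lemma Sg_Cmul (w : ℕ → ℂ) (β c : ℂ) (f : ℂ[X]) :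
    Sg w β (C c * f) = C c * Sg w β f := by
  have hle : (C c * f).natDegree ≤ f.natDegree :=
    (natDegree_mul_le).trans (by simp)
  rw [Sg_trunc w β (C c * f) hle, Sg, Finset.mul_sum]
  exact Finset.sum_congr rfl fun s _ => by
    rw [iterate_derivative_C_mul]; ring

lemma Sg_sub (w : ℕ → ℂ) (β : ℂ) (f g : ℂ[X]) :
    Sg w β (f - g) = Sg w β f - Sg w β g := by
  have : f - g = f + C (-1) * g := by rw [map_neg, map_one]; ring
  rw [this, Sg_add, Sg_Cmul, map_neg, map_one]; ring

lemma Sg_comp (w : ℕ → ℂ) (β a : ℂ) (f : ℂ[X]) :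
    Sg w β (f.comp (X - C a)) = (Sg w β f).comp (X - C a) := by
  obtain ⟨N, h1, h2⟩ : ∃ N, f.natDegree ≤ N ∧ (f.comp (X - C a)).natDegree ≤ N :=
    ⟨f.natDegree + (f.comp (X - C a)).natDegree, by omega, by omega⟩
  rw [Sg_trunc w β (f.comp (X - C a)) h2, Sg_trunc w β f h1]
  rw [Polynomial.sum_comp]
  exact Finset.sum_congr rfl fun s _ => by
    rw [iter_comp]
    simp [Polynomial.mul_comp]

/-- The operator `Φ = 1 + β d/dt`. -/
noncomputable def Phi (β : ℂ) (f : ℂ[X]) : ℂ[X] := f + C β * derivative f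

lemma Phi_inj (β : ℂ) {g h : ℂ[X]} (H : Phi β g = Phi β h) : g = h := by
  by_contra hne
  set p := g - h with hp
  have hp0 : p ≠ 0 := sub_ne_zero.2 hne
  have hP : p + C β * derivative p = 0 := by
    have := sub_eq_zero.2 H
    simp only [Phi] at this
    rw [hp, derivative_sub]
    ring_nf
    ring_nf at this
    linear_combination this
  rcases eq_or_ne p.natDegree 0 with h0 | h0
  · obtain ⟨c, hc⟩ := Polynomial.natDegree_eq_zero.mp h0
    have hdc : derivative p = 0 := by rw [← hc, derivative_C]
    rw [hdc, mul_zero, add_zero] at hP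
    exact hp0 hP
  · have hlt : (derivative p).natDegree < p.natDegree := natDegree_derivative_lt h0
    have hpe : p = -(C β * derivative p) := by linear_combination hP
    have : p.natDegree ≤ (derivative p).natDegree := by
      calc p.natDegree = (-(C β * derivative p)).natDegree := by rw [← hpe]
        _ = (C β * derivative p).natDegree := natDegree_neg _
        _ ≤ (derivative p).natDegree := natDegree_mul_le.trans (by simp)
    omega

lemma Phi_Sg (w v : ℕ → ℂ) (β : ℂ) (h0 : v 0 = w 0)
    (hs : ∀ s, v (s + 1) = w (s + 1) - w s) (f : ℂ[X]) :
    Phi β (Sg w β f) = Sg v β f := by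
  set d := f.natDegree with hd
  rw [Phi, Sg_trunc w β f (show f.natDegree ≤ d + 1 by omega),
    Sg_trunc v β f (show f.natDegree ≤ d + 1 by omega), map_sum, Finset.mul_sum]
  have hder : ∀ s : ℕ, C β * derivative (C (w s * (-β) ^ s) * (⇑(derivative (R := ℂ)))^[s] f)
      = C (β * (w s * (-β) ^ s)) * (⇑(derivative (R := ℂ)))^[s + 1] f := by
    intro s
    rw [derivative_C_mul, ← Function.iterate_succ_apply' (⇑(derivative (R := ℂ))) s f,
      ← mul_assoc, ← C_mul]
  simp only [hder]
  rw [Finset.sum_range_succ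
    (fun x => C (β * (w x * (-β) ^ x)) * (⇑(derivative (R := ℂ)))^[x + 1] f) (d + 1)]
  rw [Polynomial.iterate_derivative_eq_zero (show f.natDegree < d + 1 + 1 by omega),
    mul_zero, add_zero]
  rw [Finset.sum_range_succ'
    (fun s => C (w s * (-β) ^ s) * (⇑(derivative (R := ℂ)))^[s] f) (d + 1)]
  rw [Finset.sum_range_succ'
    (fun s => C (v s * (-β) ^ s) * (⇑(derivative (R := ℂ)))^[s] f) (d + 1)]
  simp only [pow_zero, mul_one, Function.iterate_zero, id_eq, h0]
  rw [add_right_comm, ← Finset.sum_add_distrib]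
  congr 1
  refine Finset.sum_congr rfl fun s _ => ?_
  rw [hs, ← add_mul, ← C_add]
  congr 2
  ring

def w1 : ℕ → ℂ := fun _ => 1
def w2 : ℕ → ℂ := fun s => (s : ℂ) + 1
def w3 : ℕ → ℂ := fun s => ((s : ℂ) + 1) * ((s : ℂ) + 2)

lemma Sg_const_mul (c : ℂ) (w : ℕ → ℂ) (β : ℂ) (f : ℂ[X]) :
    Sg (fun s => c * w s) β f = C c * Sg w β f := by
  rw [Sg, Sg, Finset.mul_sum]
  refine Finset.sum_congr rfl fun s _ => ?_
  rw [← mul_assoc, ← C_mul, mul_assoc]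

lemma Phi_Cmul (β c : ℂ) (g : ℂ[X]) : Phi β (C c * g) = C c * Phi β g := by
  rw [Phi, Phi, derivative_C_mul]; ring

lemma Phi_S (β : ℂ) (f : ℂ[X]) : Phi β (Sg w1 β f) = f := by
  rw [Phi_Sg w1 (fun s => if s = 0 then 1 else 0) β (by simp [w1]) (by intro s; simp [w1]) f]
  rw [Sg, Finset.sum_eq_single 0]
  · simp
  · intro b _ hb; simp [hb]
  · intro h; simp at h

lemma Phi_S2 (β : ℂ) (f : ℂ[X]) : Phi β (Sg w2 β f) = Sg w1 β f :=
  Phi_Sg w2 w1 β (by simp [w1, w2]) (by intro s; simp [w1, w2]) f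

lemma Phi_S3 (β : ℂ) (f : ℂ[X]) : Phi β (Sg w3 β f) = C 2 * Sg w2 β f := by
  rw [Phi_Sg w3 (fun s => 2 * w2 s) β (by norm_num [w2, w3])
    (by intro s; simp only [w2, w3]; push_cast; ring) f, Sg_const_mul]

lemma S2_eq (β : ℂ) (f : ℂ[X]) : Sg w2 β f = Sg w1 β (Sg w1 β f) :=
  Phi_inj β (by rw [Phi_S2, Phi_S])

lemma S3_eq (β : ℂ) (f : ℂ[X]) : Sg w3 β f = C 2 * Sg w1 β (Sg w1 β (Sg w1 β f)) :=
  Phi_inj β (by rw [Phi_S3, Phi_Cmul, Phi_S, S2_eq])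

lemma S_Xmul (β : ℂ) (f : ℂ[X]) :
    Sg w1 β (X * f) = X * Sg w1 β f - C β * Sg w2 β f := by
  set d := f.natDegree with hd
  have hXf : (X * f).natDegree ≤ d + 1 :=
    natDegree_mul_le.trans (by rw [natDegree_X, hd]; omega)
  rw [Sg_trunc _ β (X * f) hXf, Sg_trunc w1 β f (show f.natDegree ≤ d + 1 by omega), Sg,
    sub_eq_add_neg]
  simp only [iter_Xmul, mul_add]
  rw [Finset.sum_add_distrib]
  congr 1
  · rw [Finset.mul_sum]
    exact Finset.sum_congr rfl fun s _ => by ring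
  · rw [Finset.sum_range_succ'
      (fun s => C (w1 s * (-β) ^ s) * (C (s : ℂ) * (⇑(derivative (R := ℂ)))^[s - 1] f)) (d + 1)]
    simp only [Nat.cast_zero, C_0, zero_mul, mul_zero, add_zero, Nat.add_sub_cancel]
    rw [Finset.mul_sum, ← Finset.sum_neg_distrib]
    refine Finset.sum_congr rfl fun s _ => ?_
    have h5 : w1 (s + 1) * (-β) ^ (s + 1) * ((s + 1 : ℕ) : ℂ) = -β * (w2 s * (-β) ^ s) := by
      simp only [w1, w2]; push_cast; ring
    calc C (w1 (s + 1) * (-β) ^ (s + 1)) * (C ((s + 1 : ℕ) : ℂ) * (⇑(derivative (R := ℂ)))^[s] f)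
        = C (w1 (s + 1) * (-β) ^ (s + 1) * ((s + 1 : ℕ) : ℂ)) *
            (⇑(derivative (R := ℂ)))^[s] f := by rw [← mul_assoc, ← C_mul]
      _ = C (-β * (w2 s * (-β) ^ s)) * (⇑(derivative (R := ℂ)))^[s] f := by rw [h5]
      _ = -(C β * (C (w2 s * (-β) ^ s) * (⇑(derivative (R := ℂ)))^[s] f)) := by
          rw [C_mul, C_neg, neg_mul, neg_mul, mul_assoc]

lemma S_linXmul (β c : ℂ) (g : ℂ[X]) :
    Sg w1 β ((X - C c) * g)
      = (X - C c) * Sg w1 β g - C β * Sg w1 β (Sg w1 β g) := by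
  rw [sub_mul, Sg_sub, S_Xmul, Sg_Cmul, ← S2_eq]
  ring

lemma comp_comp (a b : ℂ) (g : ℂ[X]) :
    (g.comp (X - C b)).comp (X - C a) = g.comp (X - C (a + b)) := by
  rw [Polynomial.comp_assoc]
  congr 1
  rw [sub_comp, X_comp, C_comp, C_add]
  ring

lemma L1_eq (lam α β : ℂ) (i : ℤ) (f : ℂ[X]) :
    Wm1L1 lam α β i f = C (lam ^ i * β) *
      ((X - C ((i : ℂ) * α)) * ((Sg w1 β f).comp (X - C (i : ℂ)))
        - C (α * β) * ((Sg w1 β (Sg w1 β f)).comp (X - C (i : ℂ)))) := by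
  rw [← S2_eq, Wm1L1, Sg, Sg, Polynomial.sum_comp, Polynomial.sum_comp, Finset.mul_sum,
    Finset.mul_sum, ← Finset.sum_sub_distrib, Finset.mul_sum]
  refine Finset.sum_congr rfl fun s _ => ?_
  have hc : lam ^ i * (-1 : ℂ) ^ s * β ^ (s + 1) = lam ^ i * β * (-β) ^ s := by
    rw [neg_pow]; ring
  rw [hc]
  simp only [mul_comp, C_comp]
  simp only [w1, w2, one_mul, C_mul, C_add, C_1]
  ring

lemma L2_eq (lam α β : ℂ) (i : ℤ) (f : ℂ[X]) :
    Wm1L2 lam α β i f = C (lam ^ i * (β * β)) *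
      ((X - C ((i : ℂ) * α)) * ((Sg w1 β (Sg w1 β f)).comp (X - C (i : ℂ)))
        - C (α * β) * ((Sg w3 β f).comp (X - C (i : ℂ)))) := by
  rw [← S2_eq, Wm1L2, Sg, Sg, Polynomial.sum_comp, Polynomial.sum_comp, Finset.mul_sum,
    Finset.mul_sum, ← Finset.sum_sub_distrib, Finset.mul_sum]
  refine Finset.sum_congr rfl fun s _ => ?_
  have hc : lam ^ i * (-1 : ℂ) ^ s * ((s : ℂ) + 1) * β ^ (s + 2)
      = lam ^ i * (β * β) * (((s : ℂ) + 1) * (-β) ^ s) := by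
    rw [neg_pow]; ring
  rw [hc]
  simp only [mul_comp, C_comp]
  simp only [w2, w3, one_mul, C_mul, C_add, C_1, map_ofNat]
  ring

lemma S_L1 (lam α β : ℂ) (j : ℤ) (f : ℂ[X]) :
    Sg w1 β (Wm1L1 lam α β j f) = C (lam ^ j * β) *
      ((X - C ((j : ℂ) * α)) * ((Sg w1 β (Sg w1 β f)).comp (X - C (j : ℂ)))
        - C (β + α * β) *
          ((Sg w1 β (Sg w1 β (Sg w1 β f))).comp (X - C (j : ℂ)))) := by
  rw [L1_eq]
  simp only [Sg_Cmul, Sg_sub, S_linXmul, Sg_comp]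
  simp only [C_add]
  ring

lemma S_S_L1 (lam α β : ℂ) (j : ℤ) (f : ℂ[X]) :
    Sg w1 β (Sg w1 β (Wm1L1 lam α β j f)) = C (lam ^ j * β) *
      ((X - C ((j : ℂ) * α)) * ((Sg w1 β (Sg w1 β (Sg w1 β f))).comp (X - C (j : ℂ)))
        - C (2 * β + α * β) *
          ((Sg w1 β (Sg w1 β (Sg w1 β (Sg w1 β f)))).comp (X - C (j : ℂ)))) := by
  rw [S_L1]
  simp only [Sg_Cmul, Sg_sub, S_linXmul, Sg_comp]
  simp only [C_add, C_mul, map_ofNat]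
  ring

lemma L1L1 (lam α β : ℂ) (i j : ℤ) (f : ℂ[X]) :
    Wm1L1 lam α β i (Wm1L1 lam α β j f) = C ((lam ^ i * lam ^ j) * (β * β)) *
      ((X - C ((i : ℂ) * α)) *
          ((X - C (i : ℂ) - C ((j : ℂ) * α)) *
              ((Sg w1 β (Sg w1 β f)).comp (X - C ((i : ℂ) + (j : ℂ))))
            - C (β + α * β) *
              ((Sg w1 β (Sg w1 β (Sg w1 β f))).comp (X - C ((i : ℂ) + (j : ℂ)))))
        - C (α * β) *
          ((X - C (i : ℂ) - C ((j : ℂ) * α)) *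
              ((Sg w1 β (Sg w1 β (Sg w1 β f))).comp (X - C ((i : ℂ) + (j : ℂ))))
            - C (2 * β + α * β) *
              ((Sg w1 β (Sg w1 β (Sg w1 β (Sg w1 β f)))).comp
                (X - C ((i : ℂ) + (j : ℂ)))))) := by
  rw [L1_eq lam α β i (Wm1L1 lam α β j f), S_S_L1, S_L1]
  simp only [mul_comp, sub_comp, X_comp, C_comp, comp_comp]
  simp only [C_add, C_mul, map_ofNat]
  ring

end Stmt17Aux
end


/-- `L_{i,1}·(L_{j,1}·f) - L_{j,1}·(L_{i,1}·f) = (j-i)·(L_{i+j,2}·f)`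
for all `i, j ∈ ℤ` and `f ∈ ℂ[t]`. -/
theorem stmt_17 (lam α β : ℂ) (hlam : lam ≠ 0) (i j : ℤ) (f : ℂ[X]) :
    Wm1L1 lam α β i (Wm1L1 lam α β j f) - Wm1L1 lam α β j (Wm1L1 lam α β i f) =
      ((j - i : ℤ) : ℂ) • Wm1L2 lam α β (i + j) f := by
  rw [Stmt17Aux.L1L1 lam α β i j f, Stmt17Aux.L1L1 lam α β j i f,
    Stmt17Aux.L2_eq lam α β (i + j) f, Stmt17Aux.S3_eq, smul_eq_C_mul, zpow_add₀ hlam]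
  rw [show (j : ℂ) + (i : ℂ) = (i : ℂ) + (j : ℂ) from add_comm _ _]
  push_cast
  simp only [mul_comp, C_comp, map_ofNat, Polynomial.ofNat_comp]
  simp only [C_add, C_mul, C_sub, map_ofNat]
  ring
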